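/- The instruction set with methods {(F,F), (T,T), (I,I), (C,C), (I,F), (I,T), (T,I), (T,C)} is 1-size-bounded functionally complete: every primitive Boolean-register instruction on any method is behaviourally realized by a single instruction (an instruction sequence of length 1) using only methods from this set. -/

import Mathlib

/-- Unary Boolean functions. -/
abbrev BFun := Bool → Bool

/-- Constant-false. -/ def Fb : BFun := fun _ => false
/-- Constant-true. -/  def Tb : BFun := fun _ => true
/-- Identity. -/       def Ib : BFun := fun b => b
/-- Complement. -/     def Cb : BFun := fun b => !b

/-- A Boolean-register method: a reply function and a content-update function. -/
abbrev Method := BFun × BFun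

/-- Primitive instructions for a Boolean register. -/
inductive PrimInstr
  | plain (m : Method)
  | ptest (m : Method)
  | ntest (m : Method)

/-- The method carried by a primitive instruction. -/
def PrimInstr.method : PrimInstr → Method
  | .plain m => m
  | .ptest m => m
  | .ntest m => m

/-- Semantics of a primitive instruction: on register content `b`, return the
new content and whether execution proceeds with the next instruction. -/
def sem : PrimInstr → Bool → Bool × Bool
  | .plain m, b => (m.2 b, true)
  | .ptest m, b => (m.2 b, m.1 b)
  | .ntest m, b => (m.2 b, !(m.1 b))

/-- Instructions occurring in instruction sequences: basic/test instructions,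
forward jumps, and the termination instruction. -/
inductive Instr
  | basic (u : PrimInstr)
  | jump (l : ℕ)
  | halt

/-- Fuel-bounded execution of an instruction sequence on a single Boolean
register, from position `pos` with register content `b`.  `some b'` means
termination with final content `b'`; `none` means divergence/inaction
(jump `#0`, running past the end, or fuel exhaustion). -/
def run : ℕ → List Instr → ℕ → Bool → Option Bool
  | 0, _, _, _ => none
  | fuel + 1, X, pos, b =>
    match X[pos]? with
    | none => none
    | some .halt => some b
    | some (.jump l) => if l = 0 then none else run fuel X (pos + l) b
    | some (.basic u) =>
        let r := sem u b
        run fuel X (pos + if r.2 then 1 else 2) r.1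

/-- The behaviour of an instruction sequence on initial content `b`.
Since all jumps move strictly forward, `X.length + 1` steps suffice. -/
def behav (X : List Instr) (b : Bool) : Option Bool := run (X.length + 1) X 0 b

/-- `X` is an instruction sequence over the method set `M`. -/
def overM (M : Set Method) (X : List Instr) : Prop :=
  ∀ u ∈ X, ∀ v : PrimInstr, u = Instr.basic v → v.method ∈ M

/-- `X` realizes the primitive instruction `u`: for every initial register
content and every number `n` of appended termination instructions, the two
instruction sequences have identical behaviour (termination vs. divergence,
exit position) and identical final register content. -/
def Realizes (X : List Instr) (u : PrimInstr) : Prop :=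
  ∀ (b : Bool) (n : ℕ),
    behav (Instr.basic u :: List.replicate n Instr.halt) b =
    behav (X ++ List.replicate n Instr.halt) b

/-- The instruction set with methods from `M` is `k`-size-bounded functionally
complete. -/
def kComplete (M : Set Method) (k : ℕ) : Prop :=
  ∀ u : PrimInstr, ∃ X : List Instr, overM M X ∧ X.length ≤ k ∧ Realizes X u

/-- Canonical unary Boolean function with given values at `false` and `true`. -/
def canon : Bool → Bool → BFun
  | false, false => Fb
  | true, true => Tb
  | false, true => Ib
  | true, false => Cb

/-- Choose an instruction over the method set with prescribed continuation
flags (`fF`, `fT`) and updates (`uF`, `uT`) at `false`/`true`. -/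
def pick : Bool → Bool → Bool → Bool → PrimInstr
  | true, true, a, c => .plain (canon a c, canon a c)
  | false, false, false, false => .ptest (Fb, Fb)
  | false, false, true, true => .ntest (Tb, Tb)
  | false, false, false, true => .ntest (Tb, Ib)
  | false, false, true, false => .ntest (Tb, Cb)
  | false, true, false, true => .ptest (Ib, Ib)
  | false, true, false, false => .ptest (Ib, Fb)
  | false, true, true, true => .ptest (Ib, Tb)
  | false, true, true, false => .ntest (Cb, Cb)
  | true, false, false, true => .ntest (Ib, Ib)
  | true, false, false, false => .ntest (Ib, Fb)
  | true, false, true, true => .ntest (Ib, Tb)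
  | true, false, true, false => .ptest (Cb, Cb)

lemma pick_sem (fF fT uF uT b : Bool) :
    sem (pick fF fT uF uT) b = (if b then uT else uF, if b then fT else fF) := by
  cases fF <;> cases fT <;> cases uF <;> cases uT <;> cases b <;>
    simp [pick, sem, canon, Fb, Tb, Ib, Cb]

lemma pick_mem (fF fT uF uT : Bool) :
    (pick fF fT uF uT).method ∈
      ({(Fb, Fb), (Tb, Tb), (Ib, Ib), (Cb, Cb),
        (Ib, Fb), (Ib, Tb), (Tb, Ib), (Tb, Cb)} : Set Method) := by
  cases fF <;> cases fT <;> cases uF <;> cases uT <;>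
    simp [pick, PrimInstr.method, canon, Set.mem_insert_iff]

lemma run_congr : ∀ (fuel : ℕ) (L1 L2 : List Instr) (pos : ℕ) (b : Bool),
    (∀ i, pos ≤ i → L1[i]? = L2[i]?) → run fuel L1 pos b = run fuel L2 pos b := by
  intro fuel
  induction fuel with
  | zero => intros; rfl
  | succ n ih =>
    intro L1 L2 pos b h
    rw [run, run, ← h pos le_rfl]
    cases hg : L1[pos]? with
    | none => rfl
    | some ins =>
      cases ins with
      | halt => rfl
      | jump l =>
        simp only
        split
        · rfl
        · exact ih _ _ _ _ fun i hi => h i (le_trans (Nat.le_add_right _ _) hi)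
      | basic u =>
        exact ih _ _ _ _ fun i hi => h i (le_trans (Nat.le_add_right _ _) hi)

lemma realizes_single (v u : PrimInstr) (h : ∀ b, sem v b = sem u b) :
    Realizes [Instr.basic v] u := by
  intro b n
  unfold behav
  have hl : (Instr.basic u :: List.replicate n Instr.halt).length =
      ([Instr.basic v] ++ List.replicate n Instr.halt).length := by simp
  rw [hl]
  have hlen : ([Instr.basic v] ++ List.replicate n Instr.halt).length + 1 = n + 1 + 1 := by
    simp [Nat.add_comm]
  rw [hlen, run, run]
  simp only [List.singleton_append, List.getElem?_cons_zero]
  rw [h b]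
  exact run_congr _ _ _ _ _ fun i hi => by
    cases i with
    | zero => exfalso; revert hi; split <;> omega
    | succ j => rfl

/-- The instruction set with methods
{(F,F),(T,T),(I,I),(C,C),(I,F),(I,T),(T,I),(T,C)} is 1-size-bounded
functionally complete. -/
theorem one_size_bounded_complete :
    kComplete ({(Fb, Fb), (Tb, Tb), (Ib, Ib), (Cb, Cb),
                (Ib, Fb), (Ib, Tb), (Tb, Ib), (Tb, Cb)} : Set Method) 1 := by
  intro u
  obtain ⟨fF, fT, uF, uT, hs⟩ :
      ∃ fF fT uF uT : Bool, ∀ b, sem u b = (if b then uT else uF, if b then fT else fF) := by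
    refine ⟨(sem u false).2, (sem u true).2, (sem u false).1, (sem u true).1, ?_⟩
    intro b; cases b <;> rfl
  refine ⟨[Instr.basic (pick fF fT uF uT)], ?_, by simp, ?_⟩
  · intro i hi v hv
    simp at hi
    subst hi
    cases hv
    exact pick_mem fF fT uF uT
  · exact realizes_single _ _ fun b => by rw [pick_sem, hs]
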